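/- Assume m > c and 2m > 1, where m = m_u + σ_min(H)² m_y and c = σ_max(H − H_diag) σ_max(H) L_y. Let u* be the unique minimizer of Φ̃, let u∞ be the unique point with F(u∞) = 0, and let y∞ = Hu∞ + d. Then the distance between the globally optimal point and the stationary point of the decentralized controller satisfies ‖u* − u∞‖ ≤ ‖(Hᵀ − H_diag) ∇Φ²(y∞)‖ · √(1/(2m − 1)). -/

import Mathlib

open RealInnerProductSpace

/-- Largest singular value of a square matrix: the operator 2-norm of `v ↦ M v`
on Euclidean space. -/
noncomputable def sigmaMax {N : ℕ} (M : Matrix (Fin N) (Fin N) ℝ) : ℝ :=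
  ‖Matrix.toEuclideanCLM (𝕜 := ℝ) M‖

/-- Smallest singular value of a square matrix: the infimum of `‖M v‖` over the
unit sphere of Euclidean space. -/
noncomputable def sigmaMin {N : ℕ} (M : Matrix (Fin N) (Fin N) ℝ) : ℝ :=
  sInf ((fun v : EuclideanSpace ℝ (Fin N) => ‖Matrix.toEuclideanCLM (𝕜 := ℝ) M v‖) '' {v | ‖v‖ = 1})

/-- Matrix-vector multiplication as a map on Euclidean space. -/
noncomputable def mulV {N : ℕ} (M : Matrix (Fin N) (Fin N) ℝ) (v : EuclideanSpace ℝ (Fin N)) :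
    EuclideanSpace ℝ (Fin N) :=
  Matrix.toEuclideanCLM (𝕜 := ℝ) M v

lemma mulV_adjoint {N : ℕ} (M : Matrix (Fin N) (Fin N) ℝ) (x y : EuclideanSpace ℝ (Fin N)) :
    ⟪x, mulV M.transpose y⟫ = ⟪mulV M x, y⟫ := by
  have h1 : ∀ (A : Matrix (Fin N) (Fin N) ℝ) v, mulV A v = Matrix.toEuclideanLin A v := by
    intro A v
    rw [mulV, ← Matrix.coe_toEuclideanCLM_eq_toEuclideanLin]
    rfl
  rw [h1, h1, ← Matrix.conjTranspose_eq_transpose_of_trivial,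
    Matrix.toEuclideanLin_conjTranspose_eq_adjoint, LinearMap.adjoint_inner_right]

lemma sigmaMin_nonneg {N : ℕ} (hN : 0 < N) (M : Matrix (Fin N) (Fin N) ℝ) :
    0 ≤ sigmaMin M := by
  have hne : ((fun v : EuclideanSpace ℝ (Fin N) =>
      ‖Matrix.toEuclideanCLM (𝕜 := ℝ) M v‖) '' {v | ‖v‖ = 1}).Nonempty := by
    refine ⟨_, ⟨EuclideanSpace.single ⟨0, hN⟩ (1:ℝ), ?_, rfl⟩⟩
    simp [EuclideanSpace.norm_single]
  exact le_csInf hne (fun x hx => by obtain ⟨w, _, rfl⟩ := hx; exact norm_nonneg _)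

lemma sigmaMin_mul_norm_le {N : ℕ} (M : Matrix (Fin N) (Fin N) ℝ)
    (v : EuclideanSpace ℝ (Fin N)) : sigmaMin M * ‖v‖ ≤ ‖mulV M v‖ := by
  have hbdd : BddBelow ((fun v : EuclideanSpace ℝ (Fin N) =>
      ‖Matrix.toEuclideanCLM (𝕜 := ℝ) M v‖) '' {v | ‖v‖ = 1}) :=
    ⟨0, fun x hx => by obtain ⟨w, _, rfl⟩ := hx; exact norm_nonneg _⟩
  rcases eq_or_ne v 0 with rfl | hv
  · simp [mulV, sigmaMin]
  · have hvn : ‖v‖ ≠ 0 := norm_ne_zero_iff.mpr hv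
    have hw : ‖(‖v‖⁻¹ • v : EuclideanSpace ℝ (Fin N))‖ = 1 := by
      rw [norm_smul]; simp [abs_of_nonneg (norm_nonneg v), inv_mul_cancel₀ hvn]
    have hle : sigmaMin M ≤ ‖Matrix.toEuclideanCLM (𝕜 := ℝ) M (‖v‖⁻¹ • v)‖ :=
      csInf_le hbdd ⟨_, hw, rfl⟩
    rw [map_smul, norm_smul] at hle
    have h2 : sigmaMin M * ‖v‖ ≤ ‖v‖⁻¹ * ‖Matrix.toEuclideanCLM (𝕜 := ℝ) M v‖ * ‖v‖ := by
      have := mul_le_mul_of_nonneg_right hle (norm_nonneg v)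
      simpa [abs_of_nonneg (norm_nonneg v)] using this
    calc sigmaMin M * ‖v‖ ≤ ‖v‖⁻¹ * ‖Matrix.toEuclideanCLM (𝕜 := ℝ) M v‖ * ‖v‖ := h2
      _ = ‖mulV M v‖ := by field_simp [mulV]; rfl

lemma stationary {N : ℕ} (H : Matrix (Fin N) (Fin N) ℝ) (d : EuclideanSpace ℝ (Fin N))
    (Φ1 Φ2 : EuclideanSpace ℝ (Fin N) → ℝ)
    (hΦ1diff : Differentiable ℝ Φ1) (hΦ2diff : Differentiable ℝ Φ2)
    (ustar : EuclideanSpace ℝ (Fin N))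
    (hustar : ∀ u, Φ1 ustar + Φ2 (mulV H ustar + d) ≤ Φ1 u + Φ2 (mulV H u + d))
    (v : EuclideanSpace ℝ (Fin N)) :
    ⟪gradient Φ1 ustar, v⟫ + ⟪gradient Φ2 (mulV H ustar + d), mulV H v⟫ = 0 := by
  set L : ℝ → EuclideanSpace ℝ (Fin N) := fun t => ustar + t • v with hL
  have hLd : ∀ t : ℝ, HasDerivAt L v t := fun t => by
    simpa [hL] using ((hasDerivAt_id t).smul_const v).const_add ustar
  have hL0 : L 0 = ustar := by simp [hL]
  have h1 : HasDerivAt (fun t => Φ1 (L t)) ⟪gradient Φ1 ustar, v⟫ 0 := by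
    have hg : HasFDerivAt Φ1 ((InnerProductSpace.toDual ℝ _) (gradient Φ1 ustar)) (L 0) :=
      hL0.symm ▸ (hΦ1diff ustar).hasGradientAt.hasFDerivAt
    have := hg.comp_hasDerivAt 0 (hLd 0)
    simpa [InnerProductSpace.toDual_apply_apply, Function.comp_def] using this
  have haff : HasDerivAt (fun t => mulV H (L t) + d) (mulV H v) 0 := by
    have h2 : HasFDerivAt (fun u : EuclideanSpace ℝ (Fin N) => mulV H u + d)
        (Matrix.toEuclideanCLM (𝕜 := ℝ) H) ustar :=
      ((Matrix.toEuclideanCLM (𝕜 := ℝ) H).hasFDerivAt).add_const d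
    have h2' : HasFDerivAt (fun u : EuclideanSpace ℝ (Fin N) => mulV H u + d)
        (Matrix.toEuclideanCLM (𝕜 := ℝ) H) (L 0) := hL0.symm ▸ h2
    have := h2'.comp_hasDerivAt 0 (hLd 0)
    simpa [mulV, Function.comp_def] using this
  have h2 : HasDerivAt (fun t => Φ2 (mulV H (L t) + d))
      ⟪gradient Φ2 (mulV H ustar + d), mulV H v⟫ 0 := by
    have hg2 : HasFDerivAt Φ2 ((InnerProductSpace.toDual ℝ _) (gradient Φ2 (mulV H ustar + d)))
        (mulV H (L 0) + d) := hL0.symm ▸ (hΦ2diff (mulV H ustar + d)).hasGradientAt.hasFDerivAt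
    have := hg2.comp_hasDerivAt 0 haff
    simpa [InnerProductSpace.toDual_apply_apply, Function.comp_def] using this
  have hsum : HasDerivAt (fun t => Φ1 (L t) + Φ2 (mulV H (L t) + d))
      (⟪gradient Φ1 ustar, v⟫ + ⟪gradient Φ2 (mulV H ustar + d), mulV H v⟫) 0 := h1.add h2
  have hmin : IsLocalMin (fun t => Φ1 (L t) + Φ2 (mulV H (L t) + d)) 0 :=
    Filter.Eventually.of_forall (fun t => by simpa [hL0] using hustar (L t))
  exact hmin.hasDerivAt_eq_zero hsum

/-- Theorem 3: sub-optimality bound.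
Assume `m > c` and `2m > 1`. If `u*` is the unique minimizer of
`Φ̃(u) = Φ¹(u) + Φ²(Hu + d)` and `u∞` is the unique zero of the decentralized
pseudo-gradient `F`, with `y∞ = H u∞ + d`, then
`‖u* − u∞‖ ≤ ‖(Hᵀ − H_diag) ∇Φ²(y∞)‖ √(1/(2m − 1))`. -/
theorem stmt7 {N : ℕ} (hN : 0 < N)
(H : Matrix (Fin N) (Fin N) ℝ) (d : EuclideanSpace ℝ (Fin N))
    (Φ1 Φ2 : EuclideanSpace ℝ (Fin N) → ℝ)
    (mu Lu my Ly : ℝ)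
    (hmu : 0 < mu) (hmuLu : mu ≤ Lu) (hmy : 0 < my) (hmyLy : my ≤ Ly)
    (hΦ1diff : Differentiable ℝ Φ1) (hΦ2diff : Differentiable ℝ Φ2)
    (hΦ1mono : ∀ a b, mu * ‖a - b‖ ^ 2 ≤ ⟪gradient Φ1 a - gradient Φ1 b, a - b⟫)
    (hΦ1lip : ∀ a b, ‖gradient Φ1 a - gradient Φ1 b‖ ≤ Lu * ‖a - b‖)
    (hΦ2mono : ∀ a b, my * ‖a - b‖ ^ 2 ≤ ⟪gradient Φ2 a - gradient Φ2 b, a - b⟫)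
    (hΦ2lip : ∀ a b, ‖gradient Φ2 a - gradient Φ2 b‖ ≤ Ly * ‖a - b‖)
    (Hdiag : Matrix (Fin N) (Fin N) ℝ)
    (hHdiag : Hdiag = Matrix.diagonal (fun i => H i i))
    (F : EuclideanSpace ℝ (Fin N) → EuclideanSpace ℝ (Fin N))
    (hF : ∀ u, F u = gradient Φ1 u + mulV Hdiag (gradient Φ2 (mulV H u + d)))
    (m c : ℝ)
    (hm : m = mu + sigmaMin H ^ 2 * my)
    (hc : c = sigmaMax (H - Hdiag) * sigmaMax H * Ly)
    (hmc : m > c) (h2m : 2 * m > 1)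
    (ustar : EuclideanSpace ℝ (Fin N))
    (hustar : ∀ u, Φ1 ustar + Φ2 (mulV H ustar + d) ≤ Φ1 u + Φ2 (mulV H u + d))
    (uinf yinf : EuclideanSpace ℝ (Fin N))
    (huinf : F uinf = 0)
    (hyinf : yinf = mulV H uinf + d) :
    ‖ustar - uinf‖ ≤
      ‖mulV (H.transpose - Hdiag) (gradient Φ2 yinf)‖ * Real.sqrt (1 / (2 * m - 1)) := by
  set Δ := ustar - uinf with hΔ
  set g1s := gradient Φ1 ustar
  set g1i := gradient Φ1 uinf
  set g2s := gradient Φ2 (mulV H ustar + d)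
  set g2i := gradient Φ2 yinf
  set e := mulV (H.transpose - Hdiag) g2i with he
  -- linearity of mulV
  have hHsub : mulV H ustar - mulV H uinf = mulV H Δ := by
    simp only [mulV, hΔ, map_sub]
  have hesplit : e = mulV H.transpose g2i - mulV Hdiag g2i := by
    simp only [he, mulV, map_sub, ContinuousLinearMap.sub_apply]
  -- strong monotonicity pieces
  have A := hΦ1mono ustar uinf
  have B : my * ‖mulV H Δ‖ ^ 2 ≤ ⟪g2s - g2i, mulV H Δ⟫ := by
    have := hΦ2mono (mulV H ustar + d) yinf
    have hpt : (mulV H ustar + d) - yinf = mulV H Δ := by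
      rw [hyinf]; rw [← hHsub]; abel
    rwa [hpt] at this
  have C : sigmaMin H ^ 2 * my * ‖Δ‖ ^ 2 ≤ my * ‖mulV H Δ‖ ^ 2 := by
    have h0 : 0 ≤ sigmaMin H := sigmaMin_nonneg hN H
    have h1 : sigmaMin H * ‖Δ‖ ≤ ‖mulV H Δ‖ := sigmaMin_mul_norm_le H Δ
    have h2 : (sigmaMin H * ‖Δ‖) ^ 2 ≤ ‖mulV H Δ‖ ^ 2 :=
      pow_le_pow_left₀ (mul_nonneg h0 (norm_nonneg _)) h1 2
    nlinarith [hmy.le]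
  -- stationarity at ustar
  have hst : ⟪g1s, Δ⟫ + ⟪g2s, mulV H Δ⟫ = 0 :=
    stationary H d Φ1 Φ2 hΦ1diff hΦ2diff ustar hustar Δ
  -- F uinf = 0 gives the error identity
  have hFe : ⟪g1i, Δ⟫ + ⟪g2i, mulV H Δ⟫ = ⟪e, Δ⟫ := by
    have hF0 : g1i + mulV Hdiag g2i = 0 := by
      have := huinf; rw [hF uinf, ← hyinf] at this; exact this
    have hadj : ⟪g2i, mulV H Δ⟫ = ⟪mulV H.transpose g2i, Δ⟫ := by
      have h := mulV_adjoint H Δ g2i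
      exact (real_inner_comm _ _).trans (h.symm.trans (real_inner_comm _ _))
    rw [hadj, ← inner_add_left, hesplit]
    have : g1i + mulV H.transpose g2i = (g1i + mulV Hdiag g2i) +
        (mulV H.transpose g2i - mulV Hdiag g2i) := by abel
    rw [this, hF0, zero_add]
  -- combine: m ‖Δ‖² ≤ -⟪e, Δ⟫
  have key : m * ‖Δ‖ ^ 2 ≤ -⟪e, Δ⟫ := by
    rw [inner_sub_left] at A B
    rw [hm]; linarith
  have hcs : -⟪e, Δ⟫ ≤ ‖e‖ * ‖Δ‖ := by
    have h := abs_real_inner_le_norm e Δ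
    have := neg_abs_le (⟪e, Δ⟫ : ℝ)
    linarith
  have h2m' : (0:ℝ) < 2 * m - 1 := by linarith
  have hsq : ‖Δ‖ ^ 2 ≤ ‖e‖ ^ 2 * (1 / (2 * m - 1)) := by
    rw [mul_one_div, le_div_iff₀ h2m']
    nlinarith [sq_nonneg (‖e‖ - ‖Δ‖)]
  have hfin : ‖Δ‖ ≤ Real.sqrt (‖e‖ ^ 2 * (1 / (2 * m - 1))) := by
    rw [show (‖Δ‖ : ℝ) = Real.sqrt (‖Δ‖ ^ 2) from (Real.sqrt_sq (norm_nonneg _)).symm]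
    exact Real.sqrt_le_sqrt hsq
  rwa [Real.sqrt_mul (sq_nonneg _), Real.sqrt_sq (norm_nonneg _)] at hfin
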